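/- For a standard Young tableau T of hook shape (n−k, 1^{k−1}) with boxes labeled 1, …, n−1, reading its entries (first row then the rest of the first column) gives a word 1AB where AB is a shuffle of {2, …, n−1} with |B| = k−1; the signed enumeration ∑_T sign(T), where sign(T) is the sign of the permutation taking the standard (reading-order) filling to T, equals the evaluation of the Gaussian binomial C(n−2, k−1)_q at q = −1 up to absolute value. Hence the sign-imbalance of the hook (n−k, 1^{k−1}) equals C(⌊(n−2)/2⌋; ⌊(k−1)/2⌋, ⌊(n−k−1)/2⌋). -/

import Mathlib

/-- The cells of the hook shape (n-k, 1^{k-1}). -/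
def hookCells (n k : ℕ) : Finset (ℕ × ℕ) :=
  ({0} : Finset ℕ) ×ˢ Finset.range (n - k) ∪ Finset.range k ×ˢ ({0} : Finset ℕ)

/-- Standard Young tableau of hook shape (n-k, 1^{k-1}). -/
def IsHookSYT (n k : ℕ) (T : ℕ × ℕ → ℕ) : Prop :=
  (∀ c, c ∉ hookCells n k → T c = 0) ∧
  Set.BijOn T (hookCells n k : Set (ℕ × ℕ)) (Finset.Icc 1 (n - 1) : Finset ℕ) ∧
  (∀ i j j', (i, j) ∈ hookCells n k → (i, j') ∈ hookCells n k → j < j' →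
    T (i, j) < T (i, j')) ∧
  (∀ i i' j, (i, j) ∈ hookCells n k → (i', j) ∈ hookCells n k → i < i' →
    T (i, j) < T (i', j))

/-- The 0-based reading-order (standard filling) index of a cell of the hook:
the first row is read first, then the rest of the first column. -/
def stdIdx (n k : ℕ) (c : ℕ × ℕ) : ℕ := if c.1 = 0 then c.2 else (n - k) + c.1 - 1

/-- The filling of the hook obtained by applying the permutation σ to the
standard (reading-order) filling: the cell with standard entry m + 1 receives
the entry σ(m) + 1. -/
def fillingOfPerm (n k : ℕ) (σ : Equiv.Perm (Fin (n - 1))) (c : ℕ × ℕ) : ℕ :=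
  if c ∈ hookCells n k then
    (if h : stdIdx n k c < n - 1 then ((σ ⟨stdIdx n k c, h⟩ : Fin (n - 1)) : ℕ) + 1 else 0)
  else 0

/-- The Gaussian binomial coefficient C(m, r)_q as a polynomial in q. -/
noncomputable def gaussPoly (m r : ℕ) : Polynomial ℤ :=
  ∑ S ∈ (Finset.range m).powersetCard r, Polynomial.X ^ (∑ i ∈ S, i - r * (r - 1) / 2)

/-- C(N; a, b): 0 unless a + b = N, else N!/(a! b!). -/
def floorMultinomial (N a b : ℕ) : ℕ := if a + b = N then N.choose a else 0


open Finset Equiv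

namespace HookAux

variable {N : ℕ}

/-- Splitting of `Fin N` along a finset `A` of cardinality `r`. -/
def splitE (A : Finset (Fin N)) {r : ℕ} (hA : A.card = r) : (Fin r ⊕ Fin (N - r)) ≃ Fin N :=
  (Equiv.sumCongr (A.orderIsoOfFin hA).toEquiv
      ((Aᶜ).orderIsoOfFin (by simp [Finset.card_compl, hA, Fintype.card_fin])).toEquiv).trans
    ((Equiv.sumCongr (Equiv.refl _)
        (Equiv.subtypeEquivRight (fun x => Finset.mem_compl))).trans
      (Equiv.sumCompl (· ∈ A)))

lemma splitE_inl (A : Finset (Fin N)) {r : ℕ} (hA : A.card = r) (i : Fin r) :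
    splitE A hA (Sum.inl i) = A.orderEmbOfFin hA i := rfl

lemma splitE_inr (A : Finset (Fin N)) {r : ℕ} (hA : A.card = r)
    (hc : (Aᶜ).card = N - r) (j : Fin (N - r)) :
    splitE A hA (Sum.inr j) = (Aᶜ).orderEmbOfFin hc j := rfl

/-- The permutation sending the `i`-th smallest element of `A` to the `i`-th smallest
element of `B`, and similarly on complements. -/
def permOf (r : ℕ) (A B : Finset (Fin N)) (hA : A.card = r) (hB : B.card = r) :
    Equiv.Perm (Fin N) :=
  (splitE A hA).symm.trans (splitE B hB)

lemma permOf_emb {r : ℕ} {A B : Finset (Fin N)} (hA : A.card = r) (hB : B.card = r) (i : Fin r) :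
    permOf r A B hA hB (A.orderEmbOfFin hA i) = B.orderEmbOfFin hB i := by
  have h1 : (splitE A hA).symm (A.orderEmbOfFin hA i) = Sum.inl i := by
    rw [Equiv.symm_apply_eq, splitE_inl]
  simp [permOf, Equiv.trans_apply, h1, splitE_inl]

lemma permOf_embc {r : ℕ} {A B : Finset (Fin N)} (hA : A.card = r) (hB : B.card = r)
    (hc : (Aᶜ).card = N - r) (hc' : (Bᶜ).card = N - r) (j : Fin (N - r)) :
    permOf r A B hA hB ((Aᶜ).orderEmbOfFin hc j) = (Bᶜ).orderEmbOfFin hc' j := by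
  have h1 : (splitE A hA).symm ((Aᶜ).orderEmbOfFin hc j) = Sum.inr j := by
    rw [Equiv.symm_apply_eq, splitE_inr A hA hc]
  rw [permOf, Equiv.trans_apply, h1, splitE_inr B hB hc']

lemma exists_emb {A : Finset (Fin N)} {r : ℕ} (hA : A.card = r) {x : Fin N} (hx : x ∈ A) :
    ∃ i, A.orderEmbOfFin hA i = x := by
  have := Finset.range_orderEmbOfFin A hA
  have : x ∈ Set.range (A.orderEmbOfFin hA) := by rw [this]; exact_mod_cast hx
  exact this

lemma card_compl_eq {A : Finset (Fin N)} {r : ℕ} (hA : A.card = r) :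
    (Aᶜ).card = N - r := by simp [Finset.card_compl, hA, Fintype.card_fin]

lemma permOf_mem {r : ℕ} {A B : Finset (Fin N)} (hA : A.card = r) (hB : B.card = r)
    {x : Fin N} (hx : x ∈ A) : permOf r A B hA hB x ∈ B := by
  obtain ⟨i, rfl⟩ := exists_emb hA hx
  rw [permOf_emb hA hB]
  exact Finset.orderEmbOfFin_mem _ _ _

lemma permOf_not_mem {r : ℕ} {A B : Finset (Fin N)} (hA : A.card = r) (hB : B.card = r)
    {x : Fin N} (hx : x ∉ A) : permOf r A B hA hB x ∉ B := by
  have hx' : x ∈ Aᶜ := Finset.mem_compl.2 hx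
  obtain ⟨j, rfl⟩ := exists_emb (card_compl_eq hA) hx'
  rw [permOf_embc hA hB (card_compl_eq hA) (card_compl_eq hB)]
  have : (Bᶜ).orderEmbOfFin (card_compl_eq hB) j ∈ Bᶜ := Finset.orderEmbOfFin_mem _ _ _
  exact Finset.mem_compl.1 this

lemma permOf_image {r : ℕ} {A B : Finset (Fin N)} (hA : A.card = r) (hB : B.card = r) :
    A.image (permOf r A B hA hB) = B := by
  apply Finset.eq_of_subset_of_card_le
  · intro y hy
    obtain ⟨x, hx, rfl⟩ := Finset.mem_image.1 hy
    exact permOf_mem hA hB hx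
  · rw [Finset.card_image_of_injective _ (Equiv.injective _), hA, hB]

lemma permOf_smoA {r : ℕ} {A B : Finset (Fin N)} (hA : A.card = r) (hB : B.card = r) :
    StrictMonoOn (permOf r A B hA hB) ↑A := by
  intro x hx y hy hxy
  obtain ⟨i, rfl⟩ := exists_emb hA hx
  obtain ⟨j, rfl⟩ := exists_emb hA hy
  rw [permOf_emb hA hB, permOf_emb hA hB]
  have hij : i < j := by
    by_contra h
    exact absurd ((A.orderEmbOfFin hA).monotone (not_lt.1 h)) (not_le.2 hxy)
  exact (B.orderEmbOfFin hB).strictMono hij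

lemma permOf_smoAc {r : ℕ} {A B : Finset (Fin N)} (hA : A.card = r) (hB : B.card = r) :
    StrictMonoOn (permOf r A B hA hB) ↑(Aᶜ) := by
  intro x hx y hy hxy
  obtain ⟨i, rfl⟩ := exists_emb (card_compl_eq hA) hx
  obtain ⟨j, rfl⟩ := exists_emb (card_compl_eq hA) hy
  rw [permOf_embc hA hB (card_compl_eq hA) (card_compl_eq hB),
    permOf_embc hA hB (card_compl_eq hA) (card_compl_eq hB)]
  have hij : i < j := by
    by_contra h
    exact absurd (((Aᶜ).orderEmbOfFin (card_compl_eq hA)).monotone (not_lt.1 h)) (not_le.2 hxy)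
  exact ((Bᶜ).orderEmbOfFin (card_compl_eq hB)).strictMono hij

lemma permOf_unique {r : ℕ} {A B : Finset (Fin N)} (hA : A.card = r) (hB : B.card = r)
    (σ : Equiv.Perm (Fin N)) (h1 : ∀ x ∈ A, σ x ∈ B) (h2 : ∀ x, x ∉ A → σ x ∉ B)
    (h3 : StrictMonoOn σ ↑A) (h4 : StrictMonoOn σ ↑(Aᶜ)) :
    σ = permOf r A B hA hB := by
  ext x
  by_cases hx : x ∈ A
  · obtain ⟨i, rfl⟩ := exists_emb hA hx
    rw [permOf_emb hA hB]
    have hf : (fun i => σ (A.orderEmbOfFin hA i)) = B.orderEmbOfFin hB := by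
      apply Finset.orderEmbOfFin_unique hB
      · exact fun i => h1 _ (Finset.orderEmbOfFin_mem _ _ _)
      · intro i j hij
        exact h3 (by exact_mod_cast Finset.orderEmbOfFin_mem A hA i)
          (by exact_mod_cast Finset.orderEmbOfFin_mem A hA j)
          ((A.orderEmbOfFin hA).strictMono hij)
    exact congrArg Fin.val (congrFun hf i)
  · have hx' : x ∈ Aᶜ := Finset.mem_compl.2 hx
    obtain ⟨j, rfl⟩ := exists_emb (card_compl_eq hA) hx'
    rw [permOf_embc hA hB (card_compl_eq hA) (card_compl_eq hB)]
    have hf : (fun j => σ ((Aᶜ).orderEmbOfFin (card_compl_eq hA) j))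
        = (Bᶜ).orderEmbOfFin (card_compl_eq hB) := by
      apply Finset.orderEmbOfFin_unique (card_compl_eq hB)
      · intro j
        exact Finset.mem_compl.2 (h2 _ (Finset.mem_compl.1 (Finset.orderEmbOfFin_mem _ _ _)))
      · intro i j hij
        exact h4 (by exact_mod_cast Finset.orderEmbOfFin_mem (Aᶜ) (card_compl_eq hA) i)
          (by exact_mod_cast Finset.orderEmbOfFin_mem (Aᶜ) (card_compl_eq hA) j)
          (((Aᶜ).orderEmbOfFin (card_compl_eq hA)).strictMono hij)
    exact congrArg Fin.val (congrFun hf j)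

lemma permOf_trans {r : ℕ} {A B C : Finset (Fin N)} (hA : A.card = r) (hB : B.card = r)
    (hC : C.card = r) :
    permOf r B C hB hC * permOf r A B hA hB = permOf r A C hA hC := by
  rw [Equiv.Perm.mul_def]
  ext x
  simp [permOf, Equiv.trans_apply]

lemma permOf_refl {r : ℕ} {A : Finset (Fin N)} (hA hA' : A.card = r) :
    permOf r A A hA hA' = 1 := by
  ext x
  simp [permOf]

end HookAux
namespace HookAux

variable {N : ℕ}

lemma swap_smo {j j' : Fin N} (hjj : (j : ℕ) + 1 = (j' : ℕ)) (s : Set (Fin N))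
    (hs : j ∉ s ∨ j' ∉ s) : StrictMonoOn (Equiv.swap j j') s := by
  intro x hx y hy hxy
  have hxy' : (x : ℕ) < (y : ℕ) := hxy
  rw [Fin.lt_def]
  by_cases hxj : x = j
  · have hjs : ¬ (j ∉ s) := not_not_intro (hxj ▸ hx)
    have hyj' : y ≠ j' := by intro h; exact (hs.resolve_left hjs) (h ▸ hy)
    have hyj : y ≠ j := fun h => (ne_of_gt hxy) (hxj.trans h.symm).symm
    rw [hxj, Equiv.swap_apply_left, Equiv.swap_apply_of_ne_of_ne hyj hyj']
    have h1 : (y : ℕ) ≠ (j' : ℕ) := fun h => hyj' (Fin.ext h)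
    have h2 : (x : ℕ) = (j : ℕ) := by rw [hxj]
    omega
  by_cases hxj' : x = j'
  · have hj's : ¬ (j' ∉ s) := not_not_intro (hxj' ▸ hx)
    have hyj : y ≠ j := by intro h; exact (hs.resolve_right hj's) (h ▸ hy)
    have hyj' : y ≠ j' := fun h => (ne_of_gt hxy) (hxj'.trans h.symm).symm
    rw [hxj', Equiv.swap_apply_right, Equiv.swap_apply_of_ne_of_ne hyj hyj']
    have h1 : (y : ℕ) ≠ (j : ℕ) := fun h => hyj (Fin.ext h)
    have h2 : (x : ℕ) = (j' : ℕ) := by rw [hxj']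
    omega
  by_cases hyj : y = j
  · rw [Equiv.swap_apply_of_ne_of_ne hxj hxj', hyj, Equiv.swap_apply_left]
    have h2 : (y : ℕ) = (j : ℕ) := by rw [hyj]
    omega
  by_cases hyj' : y = j'
  · have h1 : (x : ℕ) ≠ (j : ℕ) := fun h => hxj (Fin.ext h)
    rw [Equiv.swap_apply_of_ne_of_ne hxj hxj', hyj', Equiv.swap_apply_right]
    have h2 : (y : ℕ) = (j' : ℕ) := by rw [hyj']
    omega
  · rw [Equiv.swap_apply_of_ne_of_ne hxj hxj', Equiv.swap_apply_of_ne_of_ne hyj hyj']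
    exact hxy'

lemma permOf_eq_swap {r : ℕ} {B : Finset (Fin N)} {j j' : Fin N}
    (hjj : (j : ℕ) + 1 = (j' : ℕ)) (hj : j ∉ B) (hj' : j' ∈ B)
    (hB : B.card = r) (hB' : (insert j (B.erase j')).card = r) :
    permOf r (insert j (B.erase j')) B hB' hB = Equiv.swap j j' := by
  have hjne : j ≠ j' := by intro h; rw [h] at hj; exact hj hj'
  have hjB' : j ∈ insert j (B.erase j') := Finset.mem_insert_self _ _
  have hj'B' : j' ∉ insert j (B.erase j') := by
    simp only [Finset.mem_insert, Finset.mem_erase]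
    push_neg
    exact ⟨hjne.symm, fun h => absurd rfl h⟩
  symm
  apply permOf_unique hB' hB
  · intro x hx
    rcases Finset.mem_insert.1 hx with h | hx'
    · rw [h, Equiv.swap_apply_left]; exact hj'
    · obtain ⟨hxj', hxB⟩ := Finset.mem_erase.1 hx'
      have hxj : x ≠ j := by intro h; rw [h] at hxB; exact hj hxB
      rw [Equiv.swap_apply_of_ne_of_ne hxj hxj']
      exact hxB
  · intro x hx
    rcases eq_or_ne x j' with h | hxj'
    · rw [h, Equiv.swap_apply_right]; exact hj
    · have hxj : x ≠ j := by intro h; rw [h] at hx; exact hx hjB'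
      rw [Equiv.swap_apply_of_ne_of_ne hxj hxj']
      intro hxB
      exact hx (Finset.mem_insert.2 (Or.inr (Finset.mem_erase.2 ⟨hxj', hxB⟩)))
  · exact swap_smo hjj _ (Or.inr (by exact_mod_cast hj'B'))
  · apply swap_smo hjj
    left
    simp only [Finset.coe_compl, Set.mem_compl_iff]
    intro h
    exact h (by exact_mod_cast hjB')

end HookAux
namespace HookAux

variable {N : ℕ}

lemma card_filter_le (a : ℕ) :
    (Finset.univ.filter (fun x : Fin N => a ≤ x.val)).card = N - a := by
  rw [show N - a = (Finset.Ico a N).card by rw [Nat.card_Ico]]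
  apply Finset.card_bij (fun (x : Fin N) _ => (x : ℕ))
  · intro x hx
    simp only [Finset.mem_filter, Finset.mem_univ, true_and] at hx
    simp [Finset.mem_Ico, hx, x.isLt]
  · intro x _ y _ h
    exact Fin.ext h
  · intro t ht
    simp only [Finset.mem_Ico] at ht
    exact ⟨⟨t, ht.2⟩, by simp [ht.1], rfl⟩

lemma eq_P_of_closed {r : ℕ} {B : Finset (Fin N)} (hB : B.card = r)
    (hcl : ∀ x ∈ B, ∀ h : (x : ℕ) + 1 < N, (⟨(x : ℕ) + 1, h⟩ : Fin N) ∈ B) :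
    B = Finset.univ.filter (fun x : Fin N => N - r ≤ x.val) := by
  have key : ∀ x ∈ B, N - r ≤ (x : ℕ) := by
    intro x hx
    have hstep : ∀ t : ℕ, ∀ h : (x : ℕ) + t < N, (⟨(x : ℕ) + t, h⟩ : Fin N) ∈ B := by
      intro t
      induction t with
      | zero => intro h; simpa using hx
      | succ t iht =>
        intro h
        have h' : (x : ℕ) + t < N := by omega
        have := hcl _ (iht h') (by omega)
        have e : (⟨(x : ℕ) + (t + 1), h⟩ : Fin N) = ⟨(x : ℕ) + t + 1, by omega⟩ := Fin.ext (Nat.add_assoc _ _ _).symm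
        rw [e]; exact this
    have hsub : Finset.univ.filter (fun y : Fin N => (x : ℕ) ≤ y.val) ⊆ B := by
      intro y hy
      simp only [Finset.mem_filter, Finset.mem_univ, true_and] at hy
      have h2 : (x : ℕ) + ((y : ℕ) - (x : ℕ)) < N := by have := y.isLt; omega
      have := hstep ((y : ℕ) - (x : ℕ)) h2
      have hyy : (⟨(x : ℕ) + ((y : ℕ) - (x : ℕ)), h2⟩ : Fin N) = y := by
        apply Fin.ext; simp; omega
      rwa [hyy] at this
    have := Finset.card_le_card hsub
    rw [card_filter_le, hB] at this
    have := x.isLt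
    omega
  apply Finset.eq_of_subset_of_card_le
  · intro x hx
    simp only [Finset.mem_filter, Finset.mem_univ, true_and]
    exact key x hx
  · rw [card_filter_le, hB]
    omega

lemma sum_val_le {B : Finset (Fin N)} {r : ℕ} (hB : B.card = r) :
    ∑ x ∈ B, (x : ℕ) ≤ r * (N - 1) := by
  calc ∑ x ∈ B, (x : ℕ) ≤ ∑ _x ∈ B, (N - 1) := by
        apply Finset.sum_le_sum
        intro x _
        have := x.isLt; omega
    _ = r * (N - 1) := by rw [Finset.sum_const, hB, smul_eq_mul]

lemma permOf_eq_swap' {r : ℕ} {B C : Finset (Fin N)} {j j' : Fin N}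
    (hjj : (j : ℕ) + 1 = (j' : ℕ)) (hj : j ∉ B) (hj' : j' ∈ B)
    (hCB : C = insert j (B.erase j')) (hC : C.card = r) (hB : B.card = r) :
    permOf r C B hC hB = Equiv.swap j j' := by
  subst hCB
  exact permOf_eq_swap hjj hj hj' hB hC

lemma sign_permOf_aux {r : ℕ} (hr : 1 ≤ r)
    (hP : (Finset.univ.filter (fun x : Fin N => N - r ≤ x.val)).card = r) (d : ℕ) :
    ∀ B : Finset (Fin N), ∀ hB : B.card = r, r * N ≤ (∑ x ∈ B, (x : ℕ)) + d →
      Equiv.Perm.sign (permOf r (Finset.univ.filter (fun x : Fin N => N - r ≤ x.val)) B hP hB)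
        = (-1) ^ ((∑ x ∈ Finset.univ.filter (fun x : Fin N => N - r ≤ x.val), (x : ℕ))
            + ∑ x ∈ B, (x : ℕ)) := by
  induction d with
  | zero =>
    intro B hB hd
    exfalso
    have h1 : ∑ x ∈ B, (x : ℕ) ≤ r * (N - 1) := sum_val_le hB
    have hN : 1 ≤ N := by
      rcases Nat.eq_zero_or_pos N with h | h
      · subst h
        have : B = ∅ := Finset.eq_empty_of_forall_notMem (fun x => x.elim0)
        rw [this] at hB; simp at hB; omega
      · exact h
    have h2 : r * (N - 1) + r = r * N := by
      cases N with
      | zero => omega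
      | succ m => simp [Nat.mul_succ]
    omega
  | succ d ih =>
    intro B hB hd
    by_cases hBP : B = Finset.univ.filter (fun x : Fin N => N - r ≤ x.val)
    · subst hBP
      rw [permOf_refl]
      rw [Equiv.Perm.sign_one]
      exact (Even.neg_one_pow ⟨_, rfl⟩).symm
    · obtain ⟨j, hjB, hj1, hj2⟩ : ∃ j ∈ B, ∃ h : (j : ℕ) + 1 < N, (⟨(j : ℕ) + 1, h⟩ : Fin N) ∉ B := by
        by_contra hc
        push_neg at hc
        exact hBP (eq_P_of_closed hB hc)
      set j' : Fin N := ⟨(j : ℕ) + 1, hj1⟩ with hj'def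
      set B' : Finset (Fin N) := insert j' (B.erase j) with hB'def
      have hjj' : (j : ℕ) + 1 = (j' : ℕ) := rfl
      have hj'B : j' ∉ B := hj2
      have hjne : j ≠ j' := by intro h; apply hj2; rw [← h]; exact hjB
      have hj'ne : j' ∉ B.erase j := fun h => hj'B (Finset.mem_erase.1 h).2
      have hB'c : B'.card = r := by
        rw [hB'def, Finset.card_insert_of_notMem hj'ne, Finset.card_erase_of_mem hjB, hB]
        omega
      have hsum' : ∑ x ∈ B', (x : ℕ) = (∑ x ∈ B, (x : ℕ)) + 1 := by
        have h1 : ∑ x ∈ B.erase j, (x : ℕ) + (j : ℕ) = ∑ x ∈ B, (x : ℕ) :=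
          Finset.sum_erase_add _ _ hjB
        rw [hB'def, Finset.sum_insert hj'ne]
        omega
      have hjB' : j ∉ B' := by
        rw [hB'def]
        simp only [Finset.mem_insert, Finset.mem_erase]
        push_neg
        exact ⟨hjne, fun h => absurd rfl h⟩
      have hj'B' : j' ∈ B' := Finset.mem_insert_self _ _
      have hBexpr : B = insert j (B'.erase j') := by
        rw [hB'def, Finset.erase_insert hj'ne, Finset.insert_erase hjB]
      -- permOf B B' = swap j j'
      have hswap : permOf r B B' hB hB'c = Equiv.swap j j' :=
        permOf_eq_swap' hjj' hjB' hj'B' hBexpr hB hB'c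
      have htrans := permOf_trans (A := Finset.univ.filter (fun x : Fin N => N - r ≤ x.val))
        (B := B) (C := B') hP hB hB'c
      have hsign := congrArg Equiv.Perm.sign htrans
      rw [map_mul, hswap, Equiv.Perm.sign_swap hjne] at hsign
      have hih := ih B' hB'c (by omega)
      rw [hih] at hsign
      have hexp : (∑ x ∈ Finset.univ.filter (fun x : Fin N => N - r ≤ x.val), (x : ℕ))
          + ∑ x ∈ B', (x : ℕ)
          = ((∑ x ∈ Finset.univ.filter (fun x : Fin N => N - r ≤ x.val), (x : ℕ))
            + ∑ x ∈ B, (x : ℕ)) + 1 := by omega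
      rw [hexp] at hsign
      set X := Equiv.Perm.sign (permOf r (Finset.univ.filter (fun x : Fin N => N - r ≤ x.val)) B hP hB) with hX
      have h2 : (-1 : ℤˣ) * ((-1) * X) = X := by
        rw [← mul_assoc, Int.units_mul_self, one_mul]
      rw [← h2, hsign, pow_succ, mul_comm ((-1 : ℤˣ) ^ _) (-1 : ℤˣ), ← mul_assoc,
        Int.units_mul_self, one_mul]
  
end HookAux
namespace HookAux

lemma Gm_rec (m r : ℕ) :
    ∑ S ∈ (Finset.range (m+1)).powersetCard (r+1), (-1 : ℤ) ^ (∑ i ∈ S, i)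
      = ∑ S ∈ (Finset.range m).powersetCard (r+1), (-1 : ℤ) ^ (∑ i ∈ S, i)
        + (-1) ^ m * ∑ S ∈ (Finset.range m).powersetCard r, (-1 : ℤ) ^ (∑ i ∈ S, i) := by
  rw [Finset.range_add_one, Finset.powersetCard_succ_insert Finset.notMem_range_self]
  rw [Finset.sum_union]
  · congr 1
    rw [Finset.sum_image]
    · rw [Finset.mul_sum]
      apply Finset.sum_congr rfl
      intro S hS
      have hmS : m ∉ S := fun h =>
        Finset.notMem_range_self ((Finset.mem_powersetCard.1 hS).1 h)
      rw [Finset.sum_insert hmS, pow_add]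
    · intro S1 h1 S2 h2 heq
      have hm1 : m ∉ S1 := fun h =>
        Finset.notMem_range_self ((Finset.mem_powersetCard.1 h1).1 h)
      have hm2 : m ∉ S2 := fun h =>
        Finset.notMem_range_self ((Finset.mem_powersetCard.1 h2).1 h)
      have := congrArg (fun s => Finset.erase s m) heq
      simpa [Finset.erase_insert hm1, Finset.erase_insert hm2] using this
  · rw [Finset.disjoint_left]
    intro S hS hS'
    obtain ⟨S', _, rfl⟩ := Finset.mem_image.1 hS'
    have : m ∈ Finset.range m := (Finset.mem_powersetCard.1 hS).1 (Finset.mem_insert_self _ _)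
    exact Finset.notMem_range_self this

lemma Gm_closed (m r : ℕ) :
    ∑ S ∈ (Finset.range m).powersetCard r, (-1 : ℤ) ^ (∑ i ∈ S, i)
      = if m % 2 = 0 ∧ r % 2 = 1 then 0
        else (-1 : ℤ) ^ (r / 2) * (((m / 2).choose (r / 2) : ℕ) : ℤ) := by
  induction m generalizing r with
  | zero =>
    match r with
    | 0 => simp
    | r + 1 =>
      have h1 : (Finset.range 0).powersetCard (r+1) = ∅ := by
        rw [Finset.powersetCard_eq_empty]
        simp
      rw [h1, Finset.sum_empty]
      rcases Nat.mod_two_eq_zero_or_one r with hr | hr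
      · rw [if_pos ⟨rfl, by omega⟩]
      · rw [if_neg (by omega)]
        have h2 : (0 / 2 : ℕ).choose ((r+1)/2) = 0 :=
          Nat.choose_eq_zero_of_lt (by omega)
        rw [h2]
        simp
  | succ m ih =>
    match r with
    | 0 => simp
    | r + 1 =>
      rw [Gm_rec, ih (r+1), ih r]
      rcases Nat.mod_two_eq_zero_or_one m with hm | hm <;>
        rcases Nat.mod_two_eq_zero_or_one r with hr | hr
      · -- m even, r even
        rw [if_pos ⟨hm, by omega⟩, if_neg (by omega), if_neg (by omega)]
        have e1 : (r+1)/2 = r/2 := by omega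
        have e2 : (m+1)/2 = m/2 := by omega
        have e3 : (-1 : ℤ)^m = 1 := Even.neg_one_pow (Nat.even_iff.2 hm)
        rw [e1, e2, e3]
        ring
      · -- m even, r odd
        rw [if_neg (by omega), if_pos ⟨hm, hr⟩, if_neg (by omega)]
        have e2 : (m+1)/2 = m/2 := by omega
        rw [e2]
        ring
      · -- m odd, r even
        rw [if_neg (by omega), if_neg (by omega),
          if_pos (show (m+1) % 2 = 0 ∧ (r+1) % 2 = 1 by omega)]
        have e1 : (r+1)/2 = r/2 := by omega
        have e3 : (-1 : ℤ)^m = -1 := Odd.neg_one_pow (Nat.odd_iff.2 hm)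
        rw [e1, e3]
        ring
      · -- m odd, r odd
        rw [if_neg (by omega), if_neg (by omega), if_neg (by omega)]
        have e1 : (r+1)/2 = r/2 + 1 := by omega
        have e2 : (m+1)/2 = m/2 + 1 := by omega
        have e3 : (-1 : ℤ)^m = -1 := Odd.neg_one_pow (Nat.odd_iff.2 hm)
        rw [e1, e2, e3, Nat.choose_succ_succ (m/2) (r/2)]
        push_cast
        ring

end HookAux
namespace HookAux

lemma mem_hookCells {n k : ℕ} {c : ℕ × ℕ} :
    c ∈ hookCells n k ↔ (c.1 = 0 ∧ c.2 < n - k) ∨ (c.1 < k ∧ c.2 = 0) := by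
  obtain ⟨c1, c2⟩ := c
  simp only [hookCells, Finset.mem_union, Finset.mem_product, Finset.mem_singleton,
    Finset.mem_range]

lemma stdIdx_lt {n k : ℕ} (hk : 2 ≤ k) (hn : k + 2 ≤ n) {c : ℕ × ℕ}
    (hc : c ∈ hookCells n k) : stdIdx n k c < n - 1 := by
  rcases mem_hookCells.1 hc with ⟨h1, h2⟩ | ⟨h1, h2⟩
  · rw [stdIdx, if_pos h1]; omega
  · by_cases h3 : c.1 = 0
    · rw [stdIdx, if_pos h3]; omega
    · rw [stdIdx, if_neg h3]; omega

lemma filling_eq {n k : ℕ} (hk : 2 ≤ k) (hn : k + 2 ≤ n) (σ : Equiv.Perm (Fin (n - 1)))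
    {c : ℕ × ℕ} (hc : c ∈ hookCells n k) :
    fillingOfPerm n k σ c = (σ ⟨stdIdx n k c, stdIdx_lt hk hn hc⟩ : ℕ) + 1 := by
  rw [fillingOfPerm, if_pos hc, dif_pos (stdIdx_lt hk hn hc)]

lemma filling_row {n k : ℕ} (hk : 2 ≤ k) (hn : k + 2 ≤ n) (σ : Equiv.Perm (Fin (n - 1)))
    {j : ℕ} (hj : j < n - k) :
    fillingOfPerm n k σ (0, j) = (σ ⟨j, by omega⟩ : ℕ) + 1 := by
  have hc : (0, j) ∈ hookCells n k := mem_hookCells.2 (Or.inl ⟨rfl, hj⟩)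
  rw [filling_eq hk hn σ hc]
  have hs : stdIdx n k (0, j) = j := by simp [stdIdx]
  have h2 : (⟨stdIdx n k (0, j), stdIdx_lt hk hn hc⟩ : Fin (n - 1)) = ⟨j, by omega⟩ :=
    Fin.ext hs
  rw [h2]

lemma filling_col {n k : ℕ} (hk : 2 ≤ k) (hn : k + 2 ≤ n) (σ : Equiv.Perm (Fin (n - 1)))
    {i : ℕ} (hi1 : 1 ≤ i) (hi2 : i < k) :
    fillingOfPerm n k σ (i, 0) = (σ ⟨n - k + i - 1, by omega⟩ : ℕ) + 1 := by
  have hc : (i, 0) ∈ hookCells n k := mem_hookCells.2 (Or.inr ⟨hi2, rfl⟩)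
  rw [filling_eq hk hn σ hc]
  have hs : stdIdx n k (i, 0) = n - k + i - 1 := by
    show (if i = 0 then (0 : ℕ) else n - k + i - 1) = n - k + i - 1
    rw [if_neg (by omega)]
  have h2 : (⟨stdIdx n k (i, 0), stdIdx_lt hk hn hc⟩ : Fin (n - 1))
      = ⟨n - k + i - 1, by omega⟩ := Fin.ext hs
  rw [h2]

lemma stdIdx_injOn {n k : ℕ} (hk : 2 ≤ k) (hn : k + 2 ≤ n) {c c' : ℕ × ℕ}
    (hc : c ∈ hookCells n k) (hc' : c' ∈ hookCells n k)
    (h : stdIdx n k c = stdIdx n k c') : c = c' := by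
  have hh := mem_hookCells.1 hc
  have hh' := mem_hookCells.1 hc'
  rw [stdIdx, stdIdx] at h
  rw [Prod.ext_iff]
  by_cases h1 : c.1 = 0 <;> by_cases h2 : c'.1 = 0
  · rw [if_pos h1, if_pos h2] at h
    exact ⟨by omega, h⟩
  · rw [if_pos h1, if_neg h2] at h
    rcases hh with ⟨_, hlt⟩ | ⟨_, he⟩ <;> rcases hh' with ⟨hz, _⟩ | ⟨hlt', _⟩ <;> omega
  · rw [if_neg h1, if_pos h2] at h
    rcases hh with ⟨hz, _⟩ | ⟨hlt, _⟩ <;> rcases hh' with ⟨_, hlt'⟩ | ⟨_, he'⟩ <;> omega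
  · rw [if_neg h1, if_neg h2] at h
    rcases hh with ⟨hz, _⟩ | ⟨hlt, he⟩
    · omega
    · rcases hh' with ⟨hz', _⟩ | ⟨hlt', he'⟩ <;> omega

lemma filling_bijOn {n k : ℕ} (hk : 2 ≤ k) (hn : k + 2 ≤ n) (σ : Equiv.Perm (Fin (n - 1))) :
    Set.BijOn (fillingOfPerm n k σ) (hookCells n k : Set (ℕ × ℕ))
      ((Finset.Icc 1 (n - 1) : Finset ℕ) : Set ℕ) := by
  refine ⟨?_, ?_, ?_⟩
  · intro c hc
    have hc' : c ∈ hookCells n k := hc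
    rw [filling_eq hk hn σ hc']
    simp only [Finset.coe_Icc, Set.mem_Icc]
    have := (σ ⟨stdIdx n k c, stdIdx_lt hk hn hc'⟩).isLt
    omega
  · intro c hc c' hc' heq
    have hcm : c ∈ hookCells n k := hc
    have hcm' : c' ∈ hookCells n k := hc'
    rw [filling_eq hk hn σ hcm, filling_eq hk hn σ hcm'] at heq
    have heq2 : σ ⟨stdIdx n k c, stdIdx_lt hk hn hcm⟩
        = σ ⟨stdIdx n k c', stdIdx_lt hk hn hcm'⟩ := Fin.ext (by omega)
    have := σ.injective heq2
    have hval : stdIdx n k c = stdIdx n k c' := congrArg Fin.val this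
    exact stdIdx_injOn hk hn hcm hcm' hval
  · intro v hv
    simp only [Finset.coe_Icc, Set.mem_Icc] at hv
    set t : Fin (n - 1) := σ.symm ⟨v - 1, by omega⟩ with htdef
    have htv : (σ t : ℕ) = v - 1 := by rw [htdef, Equiv.apply_symm_apply]
    by_cases ht : (t : ℕ) < n - k
    · refine ⟨(0, (t : ℕ)), mem_hookCells.2 (Or.inl ⟨rfl, ht⟩), ?_⟩
      rw [filling_row hk hn σ ht]
      have h2 : (⟨(t : ℕ), by omega⟩ : Fin (n - 1)) = t := Fin.ext rfl
      rw [h2, htv]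
      omega
    · have htlt := t.isLt
      refine ⟨((t : ℕ) - (n - k) + 1, 0),
        mem_hookCells.2 (Or.inr ⟨by omega, rfl⟩), ?_⟩
      rw [filling_col hk hn σ (i := (t : ℕ) - (n - k) + 1) (by omega) (by omega)]
      have heq : (⟨n - k + ((t : ℕ) - (n - k) + 1) - 1, by omega⟩ : Fin (n - 1)) = t :=
        Fin.ext (show n - k + ((t : ℕ) - (n - k) + 1) - 1 = (t : ℕ) by omega)
      rw [heq, htv]
      omega

lemma syt_iff {n k : ℕ} (hk : 2 ≤ k) (hn : k + 2 ≤ n) (σ : Equiv.Perm (Fin (n - 1))) :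
    IsHookSYT n k (fillingOfPerm n k σ) ↔
      (StrictMonoOn σ {x : Fin (n - 1) | (x : ℕ) < n - k} ∧
       StrictMonoOn σ {x : Fin (n - 1) | n - k ≤ (x : ℕ)} ∧
       ∀ x : Fin (n - 1), n - k ≤ (x : ℕ) → σ ⟨0, by omega⟩ < σ x) := by
  constructor
  · rintro ⟨h0, hbij, hrow, hcol⟩
    refine ⟨?_, ?_, ?_⟩
    · intro x hx y hy hxy
      simp only [Set.mem_setOf_eq] at hx hy
      have := hrow 0 (x : ℕ) (y : ℕ) (mem_hookCells.2 (Or.inl ⟨rfl, hx⟩))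
        (mem_hookCells.2 (Or.inl ⟨rfl, hy⟩)) hxy
      rw [filling_row hk hn σ hx, filling_row hk hn σ hy] at this
      have hxx : (⟨(x : ℕ), by omega⟩ : Fin (n - 1)) = x := Fin.ext rfl
      have hyy : (⟨(y : ℕ), by omega⟩ : Fin (n - 1)) = y := Fin.ext rfl
      rw [hxx, hyy] at this
      rw [Fin.lt_def]
      omega
    · intro x hx y hy hxy
      simp only [Set.mem_setOf_eq] at hx hy
      have hxlt := x.isLt
      have hylt := y.isLt
      have := hcol ((x : ℕ) - (n - k) + 1) ((y : ℕ) - (n - k) + 1) 0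
        (mem_hookCells.2 (Or.inr ⟨by omega, rfl⟩))
        (mem_hookCells.2 (Or.inr ⟨by omega, rfl⟩))
        (by have : (x : ℕ) < (y : ℕ) := hxy; omega)
      rw [filling_col hk hn σ (i := (x : ℕ) - (n - k) + 1) (by omega) (by omega),
        filling_col hk hn σ (i := (y : ℕ) - (n - k) + 1) (by omega) (by omega)] at this
      have hxx : (⟨n - k + ((x : ℕ) - (n - k) + 1) - 1, by omega⟩ : Fin (n - 1)) = x :=
        Fin.ext (show n - k + ((x : ℕ) - (n - k) + 1) - 1 = (x : ℕ) by omega)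
      have hyy : (⟨n - k + ((y : ℕ) - (n - k) + 1) - 1, by omega⟩ : Fin (n - 1)) = y :=
        Fin.ext (show n - k + ((y : ℕ) - (n - k) + 1) - 1 = (y : ℕ) by omega)
      rw [hxx, hyy] at this
      rw [Fin.lt_def]
      omega
    · intro x hx
      have hxlt := x.isLt
      have := hcol 0 ((x : ℕ) - (n - k) + 1) 0
        (mem_hookCells.2 (Or.inl ⟨rfl, by omega⟩))
        (mem_hookCells.2 (Or.inr ⟨by omega, rfl⟩))
        (by omega)
      rw [filling_row hk hn σ (show 0 < n - k by omega),
        filling_col hk hn σ (i := (x : ℕ) - (n - k) + 1) (by omega) (by omega)] at this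
      have hxx : (⟨n - k + ((x : ℕ) - (n - k) + 1) - 1, by omega⟩ : Fin (n - 1)) = x :=
        Fin.ext (show n - k + ((x : ℕ) - (n - k) + 1) - 1 = (x : ℕ) by omega)
      rw [hxx] at this
      rw [Fin.lt_def]
      omega
  · rintro ⟨hlow, hhigh, hzero⟩
    refine ⟨?_, filling_bijOn hk hn σ, ?_, ?_⟩
    · intro c hc
      rw [fillingOfPerm, if_neg hc]
    · intro i j j' hc hc' hjj'
      have hh' := mem_hookCells.1 hc'
      have hi0 : i = 0 ∧ j' < n - k := by
        rcases hh' with ⟨h1, h2⟩ | ⟨h1, h2⟩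
        · exact ⟨h1, h2⟩
        · omega
      obtain ⟨rfl, hj'⟩ := hi0
      have hj : j < n - k := by
        rcases mem_hookCells.1 hc with ⟨_, h2⟩ | ⟨_, h2⟩
        · exact h2
        · omega
      rw [filling_row hk hn σ hj, filling_row hk hn σ hj']
      have hmx : (⟨j, by omega⟩ : Fin (n - 1)) ∈ {x : Fin (n - 1) | (x : ℕ) < n - k} := by
        simp only [Set.mem_setOf_eq]
        exact (by omega : j < n - k)
      have hmy : (⟨j', by omega⟩ : Fin (n - 1)) ∈ {x : Fin (n - 1) | (x : ℕ) < n - k} := by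
        simp only [Set.mem_setOf_eq]
        exact (by omega : j' < n - k)
      have := @hlow ⟨j, by omega⟩ hmx ⟨j', by omega⟩ hmy
        (by rw [Fin.mk_lt_mk]; exact hjj')
      rw [Fin.lt_def] at this
      omega
    · intro i i' j hc hc' hii'
      have hh' := mem_hookCells.1 hc'
      have hj0 : i' < k ∧ j = 0 := by
        rcases hh' with ⟨h1, h2⟩ | ⟨h1, h2⟩
        · omega
        · exact ⟨h1, h2⟩
      obtain ⟨hi'k, rfl⟩ := hj0
      by_cases hi : i = 0
      · subst hi
        rw [filling_row hk hn σ (show 0 < n - k by omega),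
          filling_col hk hn σ (i := i') (by omega) hi'k]
        have := hzero ⟨n - k + i' - 1, by omega⟩
          (show n - k ≤ n - k + i' - 1 by omega)
        rw [Fin.lt_def] at this
        omega
      · have hik : i < k := by
          rcases mem_hookCells.1 hc with ⟨h1, _⟩ | ⟨h1, _⟩
          · omega
          · exact h1
        rw [filling_col hk hn σ (i := i) (by omega) hik,
          filling_col hk hn σ (i := i') (by omega) hi'k]
        have hmx : (⟨n - k + i - 1, by omega⟩ : Fin (n - 1))
            ∈ {x : Fin (n - 1) | n - k ≤ (x : ℕ)} := by
          simp only [Set.mem_setOf_eq]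
          exact (by omega : n - k ≤ n - k + i - 1)
        have hmy : (⟨n - k + i' - 1, by omega⟩ : Fin (n - 1))
            ∈ {x : Fin (n - 1) | n - k ≤ (x : ℕ)} := by
          simp only [Set.mem_setOf_eq]
          exact (by omega : n - k ≤ n - k + i' - 1)
        have := @hhigh ⟨n - k + i - 1, by omega⟩ hmx ⟨n - k + i' - 1, by omega⟩ hmy
          (by rw [Fin.mk_lt_mk]; omega)
        rw [Fin.lt_def] at this
        omega

end HookAux
namespace HookAux

def upfun (N : ℕ) (hN : 0 < N) (s : ℕ) : Fin N :=
  if h : s + 1 < N then ⟨s + 1, h⟩ else ⟨0, hN⟩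

lemma upfun_val {N : ℕ} (hN : 0 < N) {s : ℕ} (hs : s + 1 < N) :
    (upfun N hN s : ℕ) = s + 1 := by rw [upfun, dif_pos hs]

def downfun (N : ℕ) (x : Fin N) : ℕ := (x : ℕ) - 1

lemma sum_range_le_sum : ∀ (r : ℕ) (S : Finset ℕ), S.card = r →
    ∑ i ∈ Finset.range r, i ≤ ∑ i ∈ S, i := by
  intro r
  induction r with
  | zero => intro S _; simp
  | succ r ih =>
    intro S hS
    have hne : S.Nonempty := Finset.card_pos.1 (by omega)
    have hM : S.max' hne ∈ S := S.max'_mem hne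
    have hcard : (S.erase (S.max' hne)).card = r := by
      rw [Finset.card_erase_of_mem hM, hS]
      omega
    have h1 := ih _ hcard
    have h2 : r ≤ S.max' hne := by
      have hsub : S ⊆ Finset.range (S.max' hne + 1) := by
        intro x hx
        rw [Finset.mem_range]
        have := S.le_max' x hx
        omega
      have := Finset.card_le_card hsub
      rw [hS, Finset.card_range] at this
      omega
    have h3 : ∑ i ∈ S.erase (S.max' hne), i + S.max' hne = ∑ i ∈ S, i :=
      Finset.sum_erase_add _ _ hM
    rw [Finset.sum_range_succ]
    omega

end HookAux


open HookAux in
open scoped Classical in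
/-- The signed enumeration ∑_T sign(T) over standard Young tableaux T of hook
shape (n-k, 1^{k-1}), where sign(T) is the sign of the permutation taking the
standard filling to T, equals (up to absolute value) the Gaussian binomial
C(n−2, k−1)_q evaluated at q = −1; hence the sign-imbalance of the hook equals
C(⌊(n−2)/2⌋; ⌊(k−1)/2⌋, ⌊(n−k−1)/2⌋). -/
theorem hook_sign_imbalance (n k : ℕ) (hk : 2 ≤ k) (hn : k + 2 ≤ n) :
    (∑ σ ∈ Finset.univ.filter
        (fun σ : Equiv.Perm (Fin (n - 1)) => IsHookSYT n k (fillingOfPerm n k σ)),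
      (Equiv.Perm.sign σ : ℤ)).natAbs = ((gaussPoly (n - 2) (k - 1)).eval (-1)).natAbs ∧
    (∑ σ ∈ Finset.univ.filter
        (fun σ : Equiv.Perm (Fin (n - 1)) => IsHookSYT n k (fillingOfPerm n k σ)),
      (Equiv.Perm.sign σ : ℤ)).natAbs =
      floorMultinomial ((n - 2) / 2) ((k - 1) / 2) ((n - k - 1) / 2) := by
  have hr1 : 1 ≤ k - 1 := by omega
  have hnk : 2 ≤ n - k := by omega
  set P : Finset (Fin (n - 1)) :=
    Finset.univ.filter (fun x : Fin (n - 1) => (n - 1) - (k - 1) ≤ (x : ℕ)) with hPdef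
  have hPcard : P.card = k - 1 := by
    rw [hPdef, HookAux.card_filter_le]
    omega
  have hPcoe : (↑P : Set (Fin (n - 1))) = {x : Fin (n - 1) | n - k ≤ (x : ℕ)} := by
    ext x
    simp only [hPdef, Finset.coe_filter, Finset.mem_univ, true_and, Set.mem_setOf_eq]
    omega
  have hPccoe : (↑(Pᶜ) : Set (Fin (n - 1))) = {x : Fin (n - 1) | (x : ℕ) < n - k} := by
    ext x
    simp only [hPdef, Finset.coe_compl, Finset.coe_filter, Finset.mem_univ, true_and,
      Set.mem_compl_iff, Set.mem_setOf_eq]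
    omega
  have hPmem : ∀ x : Fin (n - 1), x ∈ P ↔ n - k ≤ (x : ℕ) := by
    intro x
    simp only [hPdef, Finset.mem_filter, Finset.mem_univ, true_and]
    omega
  -- the membership characterization
  have hmemiff : ∀ σ : Equiv.Perm (Fin (n - 1)),
      σ ∈ Finset.univ.filter
        (fun σ : Equiv.Perm (Fin (n - 1)) => IsHookSYT n k (fillingOfPerm n k σ)) ↔
      (StrictMonoOn σ {x : Fin (n - 1) | (x : ℕ) < n - k} ∧
       StrictMonoOn σ {x : Fin (n - 1) | n - k ≤ (x : ℕ)} ∧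
       ∀ x : Fin (n - 1), n - k ≤ (x : ℕ) → σ ⟨0, by omega⟩ < σ x) := by
    intro σ
    rw [Finset.mem_filter]
    simp only [Finset.mem_univ, true_and]
    exact syt_iff hk hn σ
  -- fixed point at zero
  have hfix0' : ∀ σ : Equiv.Perm (Fin (n - 1)),
      StrictMonoOn σ {x : Fin (n - 1) | (x : ℕ) < n - k} →
      (∀ x : Fin (n - 1), n - k ≤ (x : ℕ) → 1 ≤ (σ x : ℕ)) →
      σ ⟨0, by omega⟩ = ⟨0, by omega⟩ := by
    intro σ hlow hpos
    obtain ⟨t, hts⟩ : ∃ t : Fin (n - 1), σ t = ⟨0, by omega⟩ :=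
      ⟨σ.symm ⟨0, by omega⟩, Equiv.apply_symm_apply σ _⟩
    have htv : (σ t : ℕ) = 0 := by rw [hts]
    have ht0 : t = ⟨0, by omega⟩ := by
      by_contra htne
      by_cases htP : n - k ≤ (t : ℕ)
      · have := hpos t htP
        omega
      · have h0m : (⟨0, by omega⟩ : Fin (n - 1)) ∈ {x : Fin (n - 1) | (x : ℕ) < n - k} := by
          simp only [Set.mem_setOf_eq]
          exact (by omega : (0 : ℕ) < n - k)
        have htm : t ∈ {x : Fin (n - 1) | (x : ℕ) < n - k} := by
          simp only [Set.mem_setOf_eq]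
          omega
        have hlt : (⟨0, by omega⟩ : Fin (n - 1)) < t := by
          rw [Fin.lt_def]
          have : (t : ℕ) ≠ 0 := fun h => htne (Fin.ext h)
          exact (by omega : (0 : ℕ) < (t : ℕ))
        have hcon := hlow h0m htm hlt
        rw [Fin.lt_def] at hcon
        omega
    rw [← ht0, hts]
    exact ht0.symm
  -- up and down
  have hN0 : 0 < n - 1 := by omega
  have hup_apply : ∀ s : ℕ, s < n - 2 → ((upfun (n - 1) hN0) s : ℕ) = s + 1 :=
    fun s hs => upfun_val hN0 (by omega)
  have hdown_apply : ∀ x : Fin (n - 1), downfun (n - 1) x = (x : ℕ) - 1 := fun x => rfl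
  -- the sum reindexing
  set c0 : ℕ := (∑ x ∈ P, (x : ℕ)) + (k - 1) with hc0
  have key : (∑ σ ∈ Finset.univ.filter
        (fun σ : Equiv.Perm (Fin (n - 1)) => IsHookSYT n k (fillingOfPerm n k σ)),
      (Equiv.Perm.sign σ : ℤ))
      = ∑ S ∈ (Finset.range (n - 2)).powersetCard (k - 1), (-1 : ℤ) ^ (c0 + ∑ i ∈ S, i) := by
    apply Finset.sum_nbij'
      (f := fun σ : Equiv.Perm (Fin (n - 1)) => ((Equiv.Perm.sign σ : ℤˣ) : ℤ))
      (g := fun S : Finset ℕ => (-1 : ℤ) ^ (c0 + ∑ i ∈ S, i))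
      (i := fun σ => ((P.image σ).image (downfun (n - 1))))
      (j := fun S => if h : (S.image (upfun (n - 1) hN0)).card = k - 1
        then permOf (k - 1) P (S.image (upfun (n - 1) hN0)) hPcard h else (1 : Equiv.Perm (Fin (n - 1))))
    · -- hi
      intro σ hσ
      obtain ⟨hlow, hhigh, hz⟩ := (hmemiff σ).1 hσ
      have hfix := hfix0' σ hlow (fun x hx => by
        have := hz x hx
        rw [Fin.lt_def] at this
        omega)
      have hC0 : ∀ y ∈ P.image σ, 1 ≤ (y : ℕ) := by
        intro y hy
        obtain ⟨x, hx, rfl⟩ := Finset.mem_image.1 hy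
        have := hz x ((hPmem x).1 hx)
        rw [Fin.lt_def, hfix] at this
        omega
      rw [Finset.mem_powersetCard]
      constructor
      · intro y' hy'
        obtain ⟨y, hy, rfl⟩ := Finset.mem_image.1 hy'
        rw [Finset.mem_range, hdown_apply]
        have := y.isLt
        have := hC0 y hy
        omega
      · rw [Finset.card_image_of_injOn, Finset.card_image_of_injective _ σ.injective, hPcard]
        intro y hy y' hy' heq
        rw [Finset.mem_coe] at hy hy'
        have h1 := hC0 y hy
        have h2 := hC0 y' hy'
        rw [hdown_apply, hdown_apply] at heq
        exact Fin.ext (by omega)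
    · -- hj
      intro S hS
      obtain ⟨hSsub, hScard⟩ := Finset.mem_powersetCard.1 hS
      have hSr : ∀ s ∈ S, s < n - 2 := fun s hs => Finset.mem_range.1 (hSsub hs)
      have hCups : (S.image (upfun (n - 1) hN0)).card = k - 1 := by
        rw [Finset.card_image_of_injOn, hScard]
        intro s hs s' hs' heq
        rw [Finset.mem_coe] at hs hs'
        have h1 := hup_apply s (hSr s hs)
        have h2 := hup_apply s' (hSr s' hs')
        have : (upfun (n - 1) hN0 s : ℕ) = (upfun (n - 1) hN0 s' : ℕ) := by rw [heq]
        omega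
      rw [dif_pos hCups]
      have hpos : ∀ y ∈ S.image (upfun (n - 1) hN0), 1 ≤ (y : ℕ) := by
        intro y hy
        obtain ⟨s, hs, rfl⟩ := Finset.mem_image.1 hy
        rw [hup_apply s (hSr s hs)]
        omega
      have hG1 : StrictMonoOn (permOf (k - 1) P (S.image (upfun (n - 1) hN0)) hPcard hCups)
          {x : Fin (n - 1) | (x : ℕ) < n - k} := by
        rw [← hPccoe]
        exact permOf_smoAc hPcard hCups
      have hG2 : StrictMonoOn (permOf (k - 1) P (S.image (upfun (n - 1) hN0)) hPcard hCups)
          {x : Fin (n - 1) | n - k ≤ (x : ℕ)} := by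
        rw [← hPcoe]
        exact permOf_smoA hPcard hCups
      have hposP : ∀ x : Fin (n - 1), n - k ≤ (x : ℕ) →
          1 ≤ ((permOf (k - 1) P (S.image (upfun (n - 1) hN0)) hPcard hCups) x : ℕ) := by
        intro x hx
        exact hpos _ (permOf_mem hPcard hCups ((hPmem x).2 hx))
      rw [hmemiff]
      refine ⟨hG1, hG2, ?_⟩
      intro x hx
      have h1 := hposP x hx
      rw [hfix0' _ hG1 hposP, Fin.lt_def]
      exact h1
    · -- left inverse
      intro σ hσ
      obtain ⟨hlow, hhigh, hz⟩ := (hmemiff σ).1 hσ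
      have hfix := hfix0' σ hlow (fun x hx => by
        have := hz x hx
        rw [Fin.lt_def] at this
        omega)
      have hC0 : ∀ y ∈ P.image σ, 1 ≤ (y : ℕ) := by
        intro y hy
        obtain ⟨x, hx, rfl⟩ := Finset.mem_image.1 hy
        have := hz x ((hPmem x).1 hx)
        rw [Fin.lt_def, hfix] at this
        omega
      have hCcard : (P.image σ).card = k - 1 := by
        rw [Finset.card_image_of_injective _ σ.injective, hPcard]
      have hCimg : ((P.image σ).image (downfun (n - 1))).image (upfun (n - 1) hN0) = P.image σ := by
        rw [Finset.image_image]
        have : (P.image σ).image (upfun (n - 1) hN0 ∘ downfun (n - 1)) = (P.image σ).image id := by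
          apply Finset.image_congr
          intro y hy
          rw [Finset.mem_coe] at hy
          have h1 := hC0 y hy
          have h2 := y.isLt
          simp only [Function.comp_apply, hdown_apply, id_eq]
          have h3 : ((y : ℕ) - 1) + 1 < n - 1 := by omega
          simp only [upfun, downfun]
          rw [dif_pos h3]
          exact Fin.ext (show (y : ℕ) - 1 + 1 = (y : ℕ) by omega)
        rw [this, Finset.image_id]
      simp only [hCimg]
      rw [dif_pos hCcard]
      symm
      apply permOf_unique hPcard hCcard
      · intro x hx
        exact Finset.mem_image_of_mem σ hx
      · intro x hx hmem
        obtain ⟨y, hy, heq⟩ := Finset.mem_image.1 hmem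
        exact hx (σ.injective heq ▸ hy)
      · rw [hPcoe]
        exact hhigh
      · rw [hPccoe]
        exact hlow
    · -- right inverse
      intro S hS
      obtain ⟨hSsub, hScard⟩ := Finset.mem_powersetCard.1 hS
      have hSr : ∀ s ∈ S, s < n - 2 := fun s hs => Finset.mem_range.1 (hSsub hs)
      have hCups : (S.image (upfun (n - 1) hN0)).card = k - 1 := by
        rw [Finset.card_image_of_injOn, hScard]
        intro s hs s' hs' heq
        rw [Finset.mem_coe] at hs hs'
        have h1 := hup_apply s (hSr s hs)
        have h2 := hup_apply s' (hSr s' hs')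
        have : (upfun (n - 1) hN0 s : ℕ) = (upfun (n - 1) hN0 s' : ℕ) := by rw [heq]
        omega
      rw [dif_pos hCups]
      rw [permOf_image hPcard hCups]
      rw [Finset.image_image]
      have : S.image (downfun (n - 1) ∘ upfun (n - 1) hN0) = S.image id := by
        apply Finset.image_congr
        intro s hs
        rw [Finset.mem_coe] at hs
        simp only [Function.comp_apply, hdown_apply, id_eq]
        rw [hup_apply s (hSr s hs)]
        omega
      rw [this, Finset.image_id]
    · -- summand equality
      intro σ hσ
      obtain ⟨hlow, hhigh, hz⟩ := (hmemiff σ).1 hσ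
      have hfix := hfix0' σ hlow (fun x hx => by
        have := hz x hx
        rw [Fin.lt_def] at this
        omega)
      have hC0 : ∀ y ∈ P.image σ, 1 ≤ (y : ℕ) := by
        intro y hy
        obtain ⟨x, hx, rfl⟩ := Finset.mem_image.1 hy
        have := hz x ((hPmem x).1 hx)
        rw [Fin.lt_def, hfix] at this
        omega
      have hCcard : (P.image σ).card = k - 1 := by
        rw [Finset.card_image_of_injective _ σ.injective, hPcard]
      have huniq : σ = permOf (k - 1) P (P.image σ) hPcard hCcard := by
        apply permOf_unique hPcard hCcard
        · intro x hx
          exact Finset.mem_image_of_mem σ hx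
        · intro x hx hmem
          obtain ⟨y, hy, heq⟩ := Finset.mem_image.1 hmem
          exact hx (σ.injective heq ▸ hy)
        · rw [hPcoe]
          exact hhigh
        · rw [hPccoe]
          exact hlow
      have hsign := sign_permOf_aux (N := n - 1) hr1 hPcard ((k - 1) * (n - 1))
        (P.image σ) hCcard (Nat.le_add_left _ _)
      rw [← huniq] at hsign
      -- sum over image
      have hinj : ∀ y ∈ P.image σ, ∀ y' ∈ P.image σ, downfun (n - 1) y = downfun (n - 1) y' → y = y' := by
        intro y hy y' hy' heq
        have h1 := hC0 y hy
        have h2 := hC0 y' hy'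
        rw [hdown_apply, hdown_apply] at heq
        exact Fin.ext (by omega)
      have hsumim : ∑ i ∈ (P.image σ).image (downfun (n - 1)), i = ∑ y ∈ P.image σ, ((y : ℕ) - 1) :=
        Finset.sum_image hinj
      have hsumC : ∑ y ∈ P.image σ, (y : ℕ)
          = (∑ i ∈ (P.image σ).image (downfun (n - 1)), i) + (k - 1) := by
        rw [hsumim]
        have h1 : ∑ y ∈ P.image σ, (y : ℕ) = ∑ y ∈ P.image σ, (((y : ℕ) - 1) + 1) :=
          Finset.sum_congr rfl (fun y hy => by have := hC0 y hy; omega)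
        rw [h1, Finset.sum_add_distrib, Finset.sum_const, hCcard, smul_eq_mul, mul_one]
      have hexp : (∑ x ∈ P, (x : ℕ)) + ∑ y ∈ P.image σ, (y : ℕ)
          = c0 + ∑ i ∈ (P.image σ).image (downfun (n - 1)), i := by
        rw [hsumC, hc0]
        ring
      rw [hexp] at hsign
      rw [hsign]
      push_cast
      norm_num
  -- factor out the constant sign
  have hfactor : ∑ S ∈ (Finset.range (n - 2)).powersetCard (k - 1), (-1 : ℤ) ^ (c0 + ∑ i ∈ S, i)
      = (-1 : ℤ) ^ c0 * ∑ S ∈ (Finset.range (n - 2)).powersetCard (k - 1),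
          (-1 : ℤ) ^ (∑ i ∈ S, i) := by
    rw [Finset.mul_sum]
    exact Finset.sum_congr rfl (fun S _ => by rw [pow_add])
  have hlhs : (∑ σ ∈ Finset.univ.filter
        (fun σ : Equiv.Perm (Fin (n - 1)) => IsHookSYT n k (fillingOfPerm n k σ)),
      (Equiv.Perm.sign σ : ℤ)).natAbs
      = (∑ S ∈ (Finset.range (n - 2)).powersetCard (k - 1),
          (-1 : ℤ) ^ (∑ i ∈ S, i)).natAbs := by
    rw [key, hfactor, Int.natAbs_mul, Int.natAbs_pow]
    simp
  -- the Gauss polynomial side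
  have he0 : ∀ S ∈ (Finset.range (n - 2)).powersetCard (k - 1),
      (k - 1) * ((k - 1) - 1) / 2 ≤ ∑ i ∈ S, i := by
    intro S hS
    have hScard := (Finset.mem_powersetCard.1 hS).2
    have := sum_range_le_sum (k - 1) S hScard
    rw [Finset.sum_range_id] at this
    exact this
  have hgauss : (-1 : ℤ) ^ ((k - 1) * ((k - 1) - 1) / 2) * (gaussPoly (n - 2) (k - 1)).eval (-1)
      = ∑ S ∈ (Finset.range (n - 2)).powersetCard (k - 1), (-1 : ℤ) ^ (∑ i ∈ S, i) := by
    rw [gaussPoly, Polynomial.eval_finset_sum]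
    simp only [Polynomial.eval_pow, Polynomial.eval_X]
    rw [Finset.mul_sum]
    apply Finset.sum_congr rfl
    intro S hS
    rw [← pow_add]
    congr 1
    have := he0 S hS
    omega
  have hrhs1 : ((gaussPoly (n - 2) (k - 1)).eval (-1)).natAbs
      = (∑ S ∈ (Finset.range (n - 2)).powersetCard (k - 1),
          (-1 : ℤ) ^ (∑ i ∈ S, i)).natAbs := by
    rw [← hgauss, Int.natAbs_mul, Int.natAbs_pow]
    simp
  constructor
  · exact hlhs.trans hrhs1.symm
  · rw [hlhs, Gm_closed (n - 2) (k - 1)]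
    by_cases hcase : (n - 2) % 2 = 0 ∧ (k - 1) % 2 = 1
    · rw [if_pos hcase, floorMultinomial, if_neg (by omega)]
      rfl
    · rw [if_neg hcase, floorMultinomial, if_pos (by omega)]
      rw [Int.natAbs_mul, Int.natAbs_pow]
      simp
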